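/- Fix r ≥ 1. For nonzero β ∈ ℤ^r let div(β) denote the largest positive integer d such that β/d ∈ ℤ^r. Suppose given, for every nonzero β ∈ ℤ^r, a formal Laurent series F_β ∈ ℚ((q)). Then there exists a unique family of rational numbers n_{g,β}, indexed by g ∈ ℤ and nonzero β ∈ ℤ^r, such that for each β one has n_{g,β} = 0 for all sufficiently large g, and for every nonzero β the coefficientwise convergent identity F_β(q) = Σ_{g∈ℤ} Σ_{d | div(β)} n_{g,β/d} · ((−1)^{g−1}/d) · ((−q)^d − 2 + (−q)^{−d})^{g−1} holds in ℚ((q)). In particular, for each fixed β, the solution satisfies n_{g,β} = 0 for all sufficiently large g. -/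

import Mathlib

open HahnSeries

/-- `(−q)^d − 2 + (−q)^{−d}` as a formal Laurent series over `ℚ`. -/
noncomputable def PhiK (d : ℕ) : LaurentSeries ℚ :=
  HahnSeries.single (d : ℤ) ((-1 : ℚ) ^ d) - 2 + HahnSeries.single (-(d : ℤ)) ((-1 : ℚ) ^ d)

namespace BPS

lemma lead_mul {x y : LaurentSeries ℚ} (hx : x ≠ 0) (hy : y ≠ 0) :
    (x * y).leadingCoeff = x.leadingCoeff * y.leadingCoeff := by
  rw [leadingCoeff_eq, order_mul hx hy, coeff_mul_order_add_order]

lemma order_inv {x : LaurentSeries ℚ} (hx : x ≠ 0) : (x⁻¹).order = -x.order := by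
  have h := order_mul (x := x⁻¹) (y := x) (inv_ne_zero hx) hx
  rw [inv_mul_cancel₀ hx, order_one] at h
  linarith

lemma lead_inv {x : LaurentSeries ℚ} (hx : x ≠ 0) (h1 : x.leadingCoeff = 1) :
    (x⁻¹).leadingCoeff = 1 := by
  have h := lead_mul (inv_ne_zero hx) hx
  rw [inv_mul_cancel₀ hx, leadingCoeff_one, h1, mul_one] at h
  exact h.symm

lemma order_zpow {x : LaurentSeries ℚ} (hx : x ≠ 0) (k : ℤ) : (x ^ k).order = k * x.order := by
  induction k using Int.induction_on with
  | zero => simp [order_one]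
  | succ n ih =>
      rw [zpow_add_one₀ hx, order_mul (zpow_ne_zero _ hx) hx, ih]; ring
  | pred n ih =>
      rw [zpow_sub_one₀ hx, order_mul (zpow_ne_zero _ hx) (inv_ne_zero hx), ih, order_inv hx]
      ring

lemma lead_zpow {x : LaurentSeries ℚ} (hx : x ≠ 0) (h1 : x.leadingCoeff = 1) (k : ℤ) :
    (x ^ k).leadingCoeff = 1 := by
  induction k using Int.induction_on with
  | zero => simp [leadingCoeff_one]
  | succ n ih =>
      rw [zpow_add_one₀ hx, lead_mul (zpow_ne_zero _ hx) hx, ih, h1, mul_one]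
  | pred n ih =>
      rw [zpow_sub_one₀ hx, lead_mul (zpow_ne_zero _ hx) (inv_ne_zero hx), ih,
        lead_inv hx h1, mul_one]

lemma two_coeff (m : ℤ) : (2 : LaurentSeries ℚ).coeff m = if m = 0 then 2 else 0 := by
  rw [← map_ofNat (HahnSeries.C : ℚ →+* LaurentSeries ℚ) 2, HahnSeries.C_apply,
    HahnSeries.coeff_single]
  norm_num

lemma phiK_coeff (d : ℕ) (m : ℤ) :
    (PhiK d).coeff m = (if m = (d:ℤ) then (-1:ℚ)^d else 0) - (if m = 0 then 2 else 0)
      + (if m = -(d:ℤ) then (-1:ℚ)^d else 0) := by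
  rw [PhiK, HahnSeries.coeff_add, HahnSeries.coeff_sub, two_coeff,
    HahnSeries.coeff_single, HahnSeries.coeff_single]
  split_ifs <;> norm_num

lemma phiK_coeff_low {d : ℕ} (hd : 1 ≤ d) {m : ℤ} (hm : m < -(d:ℤ)) : (PhiK d).coeff m = 0 := by
  have hd' : (1:ℤ) ≤ (d:ℤ) := by exact_mod_cast hd
  rw [phiK_coeff, if_neg (by omega), if_neg (by omega), if_neg (by omega)]
  ring

lemma phiK_coeff_order {d : ℕ} (hd : 1 ≤ d) : (PhiK d).coeff (-(d:ℤ)) = (-1:ℚ)^d := by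
  have hd' : (1:ℤ) ≤ (d:ℤ) := by exact_mod_cast hd
  rw [phiK_coeff, if_neg (by omega), if_neg (by omega), if_pos rfl]
  ring

lemma phiK_ne_zero {d : ℕ} (hd : 1 ≤ d) : PhiK d ≠ 0 := by
  intro h
  have h2 := phiK_coeff_order hd
  rw [h] at h2
  simp only [HahnSeries.coeff_zero] at h2
  have : ((-1:ℚ)^d) ^ 2 = 1 := by
    rw [← pow_mul, mul_comm, pow_mul]; norm_num
  rw [← h2] at this
  norm_num at this

lemma phiK_order {d : ℕ} (hd : 1 ≤ d) : (PhiK d).order = -(d:ℤ) := by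
  refine le_antisymm (order_le_of_coeff_ne_zero ?_) ?_
  · rw [phiK_coeff_order hd]
    intro h
    have : ((-1:ℚ)^d) ^ 2 = 1 := by rw [← pow_mul, mul_comm, pow_mul]; norm_num
    rw [h] at this; norm_num at this
  · by_contra h
    push_neg at h
    exact (mt coeff_order_eq_zero.mp (phiK_ne_zero hd)) (phiK_coeff_low hd h)

/-- `q + 2 + q⁻¹`. -/
noncomputable def Psi : LaurentSeries ℚ := -(PhiK 1)

lemma psi_ne_zero : Psi ≠ 0 := neg_ne_zero.mpr (phiK_ne_zero le_rfl)

lemma psi_order : Psi.order = -1 := by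
  rw [Psi, order_neg, phiK_order le_rfl]; norm_num

lemma psi_lead : Psi.leadingCoeff = 1 := by
  rw [leadingCoeff_eq, psi_order, Psi, HahnSeries.coeff_neg]
  have h := phiK_coeff_order (d := 1) le_rfl
  norm_num at h ⊢
  rw [h]
  norm_num

lemma psi_zpow_coeff_low {k m : ℤ} (hm : m < -k) : (Psi ^ k).coeff m = 0 := by
  apply coeff_eq_zero_of_lt_order
  rw [order_zpow psi_ne_zero, psi_order]
  omega

lemma psi_zpow_coeff_order (k : ℤ) : (Psi ^ k).coeff (-k) = 1 := by
  have h1 := lead_zpow psi_ne_zero psi_lead k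
  rw [leadingCoeff_eq, order_zpow psi_ne_zero, psi_order] at h1
  rw [show -k = k * -1 by ring]
  exact h1

lemma phiK_zpow_coeff_low {d : ℕ} (hd : 1 ≤ d) {k m : ℤ} (hm : m < k * -(d:ℤ)) :
    ((PhiK d) ^ k).coeff m = 0 := by
  apply coeff_eq_zero_of_lt_order
  rw [order_zpow (phiK_ne_zero hd), phiK_order hd]
  exact hm

lemma neg_one_zpow_mul_phiK_one (k : ℤ) (m : ℤ) :
    (-1:ℚ) ^ k * ((PhiK 1) ^ k).coeff m = (Psi ^ k).coeff m := by
  have h0 : ((-1 : LaurentSeries ℚ)) = HahnSeries.C (-1 : ℚ) := by rw [map_neg, map_one]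
  have h : Psi ^ k = HahnSeries.C ((-1:ℚ)^k) * (PhiK 1) ^ k := by
    rw [map_zpow₀ (HahnSeries.C : ℚ →+* LaurentSeries ℚ), ← h0, ← mul_zpow, neg_one_mul, Psi]
  rw [h, HahnSeries.C_apply, coeff_single_zero_mul]

/-- Downward-recursive expansion coefficients: `expAux γ K n` is the coefficient of `Psi ^ (K-n)`
in the expansion of a series with coefficient function `γ` supported in degrees `≥ -K`. -/
noncomputable def expAux (γ : ℤ → ℚ) (K : ℤ) : ℕ → ℚ
  | n => γ ((n:ℤ) - K) - ∑ i ∈ (Finset.range n).attach,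
      expAux γ K i.1 * ((Psi ^ (K - (i.1:ℤ))).coeff ((n:ℤ) - K))
  termination_by n => n
  decreasing_by exact Finset.mem_range.mp i.2

lemma expAux_eq (γ : ℤ → ℚ) (K : ℤ) (n : ℕ) :
    expAux γ K n = γ ((n:ℤ) - K) - ∑ i ∈ Finset.range n,
      expAux γ K i * ((Psi ^ (K - (i:ℤ))).coeff ((n:ℤ) - K)) := by
  rw [expAux]
  congr 1
  exact Finset.sum_attach (Finset.range n) fun i =>
    expAux γ K i * ((Psi ^ (K - (i:ℤ))).coeff ((n:ℤ) - K))

lemma expansion_exists (γ : ℤ → ℚ) (L0 : ℤ) (hγ : ∀ m, m < L0 → γ m = 0) :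
    ∃ c : ℤ → ℚ, (∀ k, -L0 < k → c k = 0) ∧
      ∀ m, γ m = ∑ᶠ k : ℤ, c k * (Psi ^ k).coeff m := by
  set K : ℤ := -L0 with hKdef
  set c : ℤ → ℚ := fun k => if k ≤ K then expAux γ K (K - k).toNat else 0 with hcdef
  refine ⟨c, fun k hk => if_neg (not_le.mpr hk), fun m => ?_⟩
  have hsupp : (Function.support fun k => c k * (Psi ^ k).coeff m) ⊆ ↑(Finset.Icc (-m) K) := by
    intro k hk
    simp only [Function.mem_support] at hk
    simp only [Finset.coe_Icc, Set.mem_Icc]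
    constructor
    · by_contra hlt
      push_neg at hlt
      rw [psi_zpow_coeff_low (by omega), mul_zero] at hk
      exact hk rfl
    · by_contra hlt
      push_neg at hlt
      rw [hcdef] at hk
      simp only [if_neg (not_le.mpr hlt), zero_mul] at hk
      exact hk rfl
  rw [finsum_eq_sum_of_support_subset _ hsupp]
  by_cases hm : m < L0
  · rw [Finset.Icc_eq_empty (by omega), Finset.sum_empty, hγ m hm]
  · push_neg at hm
    set n : ℕ := (m + K).toNat with hn
    have hmn : m = (n:ℤ) - K := by
      rw [hn, Int.toNat_of_nonneg (by omega)]; ring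
    have hinj : ∀ x ∈ Finset.range (n+1), ∀ y ∈ Finset.range (n+1),
        K - (x:ℤ) = K - (y:ℤ) → x = y := by
      intro x _ y _ hxy; omega
    have himg : Finset.Icc (-m) K = (Finset.range (n+1)).image (fun i : ℕ => K - (i:ℤ)) := by
      ext k
      simp only [Finset.mem_Icc, Finset.mem_image, Finset.mem_range]
      constructor
      · rintro ⟨h1, h2⟩
        exact ⟨(K - k).toNat, by omega, by omega⟩
      · rintro ⟨i, hi, rfl⟩
        omega
    have hc : ∀ i : ℕ, c (K - (i:ℤ)) = expAux γ K i := by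
      intro i
      rw [hcdef]
      simp only [sub_le_self_iff, Int.natCast_nonneg, if_pos]
      congr 1
      omega
    rw [himg, Finset.sum_image hinj, hmn]
    rw [Finset.sum_congr rfl (fun (i : ℕ) (_ : i ∈ Finset.range (n+1)) => by rw [hc i])]
    rw [Finset.sum_range_succ,
      show (Psi ^ (K - (n:ℤ))).coeff ((n:ℤ) - K) = 1 by
        rw [show (n:ℤ) - K = -(K - (n:ℤ)) by ring]; exact psi_zpow_coeff_order _,
      mul_one, expAux_eq γ K n]
    ring

lemma expansion_unique (c : ℤ → ℚ) (K : ℤ) (hK : ∀ k, K ≤ k → c k = 0)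
    (h : ∀ m, ∑ᶠ k : ℤ, c k * (Psi ^ k).coeff m = 0) : ∀ k, c k = 0 := by
  intro k
  by_contra hc
  obtain ⟨lub, hlub, hmax⟩ := Int.exists_greatest_of_bdd (P := fun z => c z ≠ 0)
    ⟨K, fun z hz => by by_contra hzK; exact hz (hK z (by omega))⟩ ⟨k, hc⟩
  have h0 := h (-lub)
  rw [finsum_eq_single _ lub ?_] at h0
  · rw [psi_zpow_coeff_order, mul_one] at h0
    exact hlub h0
  · intro x hx
    by_cases hcx : c x = 0
    · rw [hcx, zero_mul]
    · have hxle := hmax x hcx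
      rw [psi_zpow_coeff_low (by omega), mul_zero]


section Multi

variable {r : ℕ}

/-- `ℓ¹`-norm of a lattice vector. -/
def nrm (β : Fin r → ℤ) : ℕ := ∑ i, (β i).natAbs

lemma nrm_pos {β : Fin r → ℤ} (hβ : β ≠ 0) : 0 < nrm β := by
  rcases Nat.eq_zero_or_pos (nrm β) with h | h
  · exfalso
    apply hβ
    funext i
    have hi := (Finset.sum_eq_zero_iff.mp h) i (Finset.mem_univ i)
    simpa [Int.natAbs_eq_zero] using hi
  · exact h

lemma dvd_le_nrm {β : Fin r → ℤ} (hβ : β ≠ 0) {d : ℕ} (hd0 : 0 < d)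
    (hdvd : ∀ i, (d:ℤ) ∣ β i) : d ≤ nrm β := by
  obtain ⟨i, hi⟩ := Function.ne_iff.mp hβ
  have h1 : d ∣ (β i).natAbs := by
    have := Int.natAbs_dvd_natAbs.mpr (hdvd i)
    simpa using this
  have h2 : d ≤ (β i).natAbs := Nat.le_of_dvd (Int.natAbs_pos.mpr hi) h1
  exact h2.trans (Finset.single_le_sum (f := fun j => (β j).natAbs)
    (fun _ _ => Nat.zero_le _) (Finset.mem_univ i))

lemma div_natAbs_le {a : ℤ} {d : ℕ} (hd : 0 < d) (h : (d:ℤ) ∣ a) :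
    (a / (d:ℤ)).natAbs ≤ a.natAbs := by
  obtain ⟨c, rfl⟩ := h
  rw [Int.mul_ediv_cancel_left _ (by exact_mod_cast hd.ne')]
  rw [Int.natAbs_mul]
  calc c.natAbs ≤ d * c.natAbs := Nat.le_mul_of_pos_left _ hd
  _ = (d:ℤ).natAbs * c.natAbs := by simp

lemma div_natAbs_lt {a : ℤ} {d : ℕ} (hd : 2 ≤ d) (h : (d:ℤ) ∣ a) (ha : a ≠ 0) :
    (a / (d:ℤ)).natAbs < a.natAbs := by
  obtain ⟨c, rfl⟩ := h
  have hc : c ≠ 0 := by rintro rfl; simp at ha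
  rw [Int.mul_ediv_cancel_left _ (by exact_mod_cast (by omega : d ≠ 0))]
  rw [Int.natAbs_mul]
  have : (d:ℤ).natAbs = d := Int.natAbs_natCast d
  rw [this]
  have hc' : 0 < c.natAbs := Int.natAbs_pos.mpr hc
  calc c.natAbs = 1 * c.natAbs := (one_mul _).symm
  _ < d * c.natAbs := by
      exact (Nat.mul_lt_mul_right hc').mpr (by omega)

lemma nrm_div_lt {β : Fin r → ℤ} (hβ : β ≠ 0) {d : ℕ} (hd : 2 ≤ d)
    (hdvd : ∀ i, (d:ℤ) ∣ β i) : nrm (fun i => β i / (d:ℤ)) < nrm β := by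
  obtain ⟨i0, hi0⟩ := Function.ne_iff.mp hβ
  exact Finset.sum_lt_sum
    (fun i _ => div_natAbs_le (by omega) (hdvd i))
    ⟨i0, Finset.mem_univ i0, div_natAbs_lt hd (hdvd i0) hi0⟩

lemma div_ne_zero {β : Fin r → ℤ} (hβ : β ≠ 0) {d : ℕ} (hd : 0 < d)
    (hdvd : ∀ i, (d:ℤ) ∣ β i) : (fun i => β i / (d:ℤ)) ≠ 0 := by
  obtain ⟨i0, hi0⟩ := Function.ne_iff.mp hβ
  intro h
  apply hi0
  have h0 := congrFun h i0
  simp only [Pi.zero_apply] at h0 ⊢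
  obtain ⟨c, hc⟩ := hdvd i0
  rw [hc, Int.mul_ediv_cancel_left _ (by exact_mod_cast hd.ne')] at h0
  rw [hc, h0, mul_zero]

lemma div_one_eq (β : Fin r → ℤ) : (fun i => β i / ((1:ℕ):ℤ)) = β := by
  funext i; simp

end Multi

section Sums

variable {r : ℕ}

/-- The general term of the BPS expansion. -/
noncomputable def tms (n : ℤ → (Fin r → ℤ) → ℚ) (β : Fin r → ℤ) (m g : ℤ) (d : ℕ) : ℚ :=
  if 0 < d ∧ ∀ i : Fin r, (d : ℤ) ∣ β i then
    n g (fun i => β i / (d : ℤ)) * ((-1 : ℚ) ^ (g - 1) / (d : ℚ)) *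
      ((PhiK d) ^ (g - 1)).coeff m
  else 0

/-- The `d ≥ 2` part of the expansion, with values given by an abstract family `v`. -/
noncomputable def corrV (β : Fin r → ℤ) (v : ℕ → ℤ → ℚ) (m : ℤ) : ℚ :=
  ∑ᶠ g : ℤ, ∑ d ∈ Finset.Icc 2 (nrm β),
    if 0 < d ∧ ∀ i : Fin r, (d : ℤ) ∣ β i then
      v d g * ((-1 : ℚ) ^ (g - 1) / (d : ℚ)) * ((PhiK d) ^ (g - 1)).coeff m
    else 0

/-- The `d ≥ 2` part of the expansion for a coefficient family `n`. -/
noncomputable def corr (n : ℤ → (Fin r → ℤ) → ℚ) (β : Fin r → ℤ) (m : ℤ) : ℚ :=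
  corrV β (fun d g => n g (fun i => β i / (d : ℤ))) m

lemma corr_eq (n : ℤ → (Fin r → ℤ) → ℚ) (β : Fin r → ℤ) (m : ℤ) :
    corr n β m = ∑ᶠ g : ℤ, ∑ d ∈ Finset.Icc 2 (nrm β), tms n β m g d := rfl

lemma finsum_tms_d (n : ℤ → (Fin r → ℤ) → ℚ) {β : Fin r → ℤ} (hβ : β ≠ 0) (m g : ℤ) :
    ∑ᶠ d : ℕ, tms n β m g d = ∑ d ∈ Finset.Icc 1 (nrm β), tms n β m g d := by
  apply finsum_eq_sum_of_support_subset
  intro d hd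
  simp only [Function.mem_support, tms] at hd
  simp only [Finset.coe_Icc, Set.mem_Icc]
  by_cases hc : 0 < d ∧ ∀ i : Fin r, (d : ℤ) ∣ β i
  · exact ⟨hc.1, dvd_le_nrm hβ hc.1 hc.2⟩
  · rw [if_neg hc] at hd
    exact absurd rfl hd

lemma sum_tms_split (n : ℤ → (Fin r → ℤ) → ℚ) {β : Fin r → ℤ} (hβ : β ≠ 0) (m g : ℤ) :
    ∑ d ∈ Finset.Icc 1 (nrm β), tms n β m g d
      = n g β * (Psi ^ (g - 1)).coeff m + ∑ d ∈ Finset.Icc 2 (nrm β), tms n β m g d := by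
  have h1 : Finset.Icc 1 (nrm β) = insert 1 (Finset.Icc 2 (nrm β)) := by
    have := nrm_pos hβ
    ext x
    simp only [Finset.mem_Icc, Finset.mem_insert]
    omega
  rw [h1, Finset.sum_insert (by simp [Finset.mem_Icc])]
  congr 1
  rw [tms, if_pos ⟨one_pos, fun i => by simp⟩, div_one_eq, Nat.cast_one, div_one,
    mul_assoc, neg_one_zpow_mul_phiK_one]

lemma support_sum_tms (n : ℤ → (Fin r → ℤ) → ℚ) {β : Fin r → ℤ} {G : ℤ}
    (hvan : ∀ d : ℕ, 0 < d → (∀ i, (d:ℤ) ∣ β i) → ∀ g, G ≤ g → n g (fun i => β i / (d:ℤ)) = 0)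
    (m : ℤ) (s : Finset ℕ) :
    (Function.support fun g => ∑ d ∈ s, tms n β m g d)
      ⊆ ↑(Finset.Icc (1 - max 0 m) (G - 1)) := by
  intro g hg
  simp only [Function.mem_support] at hg
  simp only [Finset.coe_Icc, Set.mem_Icc]
  constructor
  · by_contra hlt
    push_neg at hlt
    apply hg
    apply Finset.sum_eq_zero
    intro d _
    rw [tms]
    split_ifs with hc
    · rw [phiK_zpow_coeff_low hc.1 ?_, mul_zero]
      have h1 : (1:ℤ) ≤ (d:ℤ) := by exact_mod_cast hc.1
      have h2 : (0:ℤ) ≤ max 0 m := le_max_left 0 m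
      have h3 : m ≤ max 0 m := le_max_right 0 m
      nlinarith
    · rfl
  · by_contra hlt
    push_neg at hlt
    apply hg
    apply Finset.sum_eq_zero
    intro d _
    rw [tms]
    split_ifs with hc
    · rw [hvan d hc.1 hc.2 g (by omega), zero_mul, zero_mul]
    · rfl

lemma support_mul_psi {a : ℤ → ℚ} {G : ℤ} (ha : ∀ g, G ≤ g → a g = 0) (m : ℤ) :
    (Function.support fun g => a g * (Psi ^ (g - 1)).coeff m)
      ⊆ ↑(Finset.Icc (1 - max 0 m) (G - 1)) := by
  intro g hg
  simp only [Function.mem_support] at hg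
  simp only [Finset.coe_Icc, Set.mem_Icc]
  constructor
  · by_contra hlt
    push_neg at hlt
    apply hg
    have h3 : m ≤ max 0 m := le_max_right 0 m
    rw [psi_zpow_coeff_low (by omega), mul_zero]
  · by_contra hlt
    push_neg at hlt
    rw [ha g (by omega), zero_mul] at hg
    exact hg rfl

lemma rhs_split (n : ℤ → (Fin r → ℤ) → ℚ) {β : Fin r → ℤ} (hβ : β ≠ 0) {G : ℤ}
    (hvan : ∀ d : ℕ, 0 < d → (∀ i, (d:ℤ) ∣ β i) → ∀ g, G ≤ g → n g (fun i => β i / (d:ℤ)) = 0)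
    (m : ℤ) :
    ∑ᶠ g : ℤ, ∑ᶠ d : ℕ, tms n β m g d
      = (∑ᶠ g : ℤ, n g β * (Psi ^ (g - 1)).coeff m) + corr n β m := by
  have hn : ∀ g, G ≤ g → n g β = 0 := by
    intro g hg
    have h := hvan 1 one_pos (fun i => by simp) g hg
    rwa [div_one_eq] at h
  have e1 : ∀ g : ℤ, ∑ᶠ d : ℕ, tms n β m g d
      = n g β * (Psi ^ (g - 1)).coeff m + ∑ d ∈ Finset.Icc 2 (nrm β), tms n β m g d := by
    intro g
    rw [finsum_tms_d n hβ, sum_tms_split n hβ]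
  rw [finsum_congr e1, corr_eq]
  apply finsum_add_distrib
  · exact Set.Finite.subset (Finset.finite_toSet _) (support_mul_psi hn m)
  · exact Set.Finite.subset (Finset.finite_toSet _) (support_sum_tms n hvan m _)

lemma corrV_eq_zero {β : Fin r → ℤ} (v : ℕ → ℤ → ℚ) {Gn : ℕ}
    (hvan : ∀ d : ℕ, 2 ≤ d → (∀ i, (d:ℤ) ∣ β i) → ∀ g : ℤ, (Gn:ℤ) ≤ g → v d g = 0)
    {m : ℤ} (hm : m < -((nrm β * Gn : ℕ) : ℤ)) : corrV β v m = 0 := by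
  rw [corrV]
  apply finsum_eq_zero_of_forall_eq_zero
  intro g
  apply Finset.sum_eq_zero
  intro d hd
  rw [Finset.mem_Icc] at hd
  split_ifs with hc
  · by_cases hg : (Gn:ℤ) ≤ g
    · rw [hvan d hd.1 hc.2 g hg, zero_mul, zero_mul]
    · push_neg at hg
      rw [phiK_zpow_coeff_low hc.1 ?_, mul_zero]
      have hd2 : (2:ℤ) ≤ (d:ℤ) := by exact_mod_cast hd.1
      have hdD : (d:ℤ) ≤ (nrm β : ℤ) := by exact_mod_cast hd.2
      push_cast at hm
      rcases le_or_gt (g - 1) 0 with h | h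
      · have h0 : 0 ≤ (-(g - 1)) * (d:ℤ) := mul_nonneg (by linarith) (by linarith)
        have h1 : (0:ℤ) ≤ (nrm β : ℤ) * (Gn : ℤ) := by positivity
        have e : (g - 1) * (-(d:ℤ)) = (-(g - 1)) * (d:ℤ) := by ring
        rw [e]
        linarith
      · have h1 : (d:ℤ) * (g - 1) ≤ (nrm β : ℤ) * (Gn : ℤ) :=
          mul_le_mul hdD (by omega) (by omega) (by positivity)
        have h2 : (g - 1) * (-(d:ℤ)) = -((d:ℤ) * (g - 1)) := by ring
        linarith
  · rfl

lemma uniform_bound {β : Fin r → ℤ} (hβ : β ≠ 0) (n : ℤ → (Fin r → ℤ) → ℚ)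
    (h : ∀ β' : Fin r → ℤ, ∃ K : ℤ, ∀ g, K ≤ g → n g β' = 0) :
    ∃ G : ℤ, ∀ d : ℕ, 0 < d → (∀ i, (d:ℤ) ∣ β i) → ∀ g, G ≤ g →
      n g (fun i => β i / (d:ℤ)) = 0 := by
  choose K hK using h
  refine ⟨(((Finset.Icc 1 (nrm β)).sup fun d => (K (fun i => β i / (d:ℤ))).toNat : ℕ) : ℤ), ?_⟩
  intro d hd0 hdvd g hg
  apply hK
  have hdm : d ∈ Finset.Icc 1 (nrm β) := Finset.mem_Icc.mpr ⟨hd0, dvd_le_nrm hβ hd0 hdvd⟩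
  have h1 : (K (fun i => β i / (d:ℤ))).toNat
      ≤ (Finset.Icc 1 (nrm β)).sup (fun d : ℕ => (K (fun i => β i / (d:ℤ))).toNat) :=
    Finset.le_sup (f := fun d : ℕ => (K (fun i => β i / (d:ℤ))).toNat) hdm
  have h2 := Int.self_le_toNat (K (fun i => β i / (d:ℤ)))
  omega

end Sums

section Sol

variable {r : ℕ}

lemma sol_step {β : Fin r → ℤ} (hβ : β ≠ 0) (A : LaurentSeries ℚ)
    (w : ℕ → {c : ℤ → ℚ // ∃ K : ℤ, ∀ g, K ≤ g → c g = 0}) :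
    ∃ c : ℤ → ℚ, (∃ K : ℤ, ∀ k, K ≤ k → c k = 0) ∧
      ∀ m, A.coeff m - corrV β (fun d g => (w d).1 g) m
        = ∑ᶠ k : ℤ, c k * (Psi ^ k).coeff m := by
  choose Kd hKd' using fun d => (w d).2
  set Gn : ℕ := (Finset.Icc 2 (nrm β)).sup fun d => (Kd d).toNat with hGn
  have hvan : ∀ d : ℕ, 2 ≤ d → (∀ i, (d:ℤ) ∣ β i) → ∀ g : ℤ, (Gn:ℤ) ≤ g → (w d).1 g = 0 := by
    intro d h2 hdvd g hg
    apply hKd' d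
    have hdm : d ∈ Finset.Icc 2 (nrm β) :=
      Finset.mem_Icc.mpr ⟨h2, dvd_le_nrm hβ (by omega) hdvd⟩
    have h1 : (Kd d).toNat ≤ Gn := Finset.le_sup (f := fun d => (Kd d).toNat) hdm
    have h2' := Int.self_le_toNat (Kd d)
    omega
  set L0 : ℤ := min A.order (-((nrm β * Gn : ℕ) : ℤ)) with hL0
  have hγ : ∀ m, m < L0 → A.coeff m - corrV β (fun d g => (w d).1 g) m = 0 := by
    intro m hm
    rw [coeff_eq_zero_of_lt_order (lt_of_lt_of_le hm (min_le_left _ _)),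
      corrV_eq_zero _ hvan (lt_of_lt_of_le hm (min_le_right _ _)), sub_zero]
  obtain ⟨c, hc1, hc2⟩ := expansion_exists
    (fun m => A.coeff m - corrV β (fun d g => (w d).1 g) m) L0 hγ
  exact ⟨c, ⟨-L0 + 1, fun k hk => hc1 k (by omega)⟩, hc2⟩

/-- The trivial element. -/
noncomputable def zeroEl : {c : ℤ → ℚ // ∃ K : ℤ, ∀ g, K ≤ g → c g = 0} :=
  ⟨0, 0, fun _ _ => rfl⟩

/-- Fuel-indexed approximations to the BPS coefficients. -/
noncomputable def solA (F : (Fin r → ℤ) → LaurentSeries ℚ) :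
    ℕ → (Fin r → ℤ) → {c : ℤ → ℚ // ∃ K : ℤ, ∀ g, K ≤ g → c g = 0}
  | 0, _ => zeroEl
  | (N+1), β =>
    if hβ : β = 0 then zeroEl
    else
      ⟨fun g => Classical.choose (sol_step hβ (F β)
          (fun d => if _h : 2 ≤ d ∧ ∀ i, (d:ℤ) ∣ β i
            then solA F N (fun i => β i / (d:ℤ)) else zeroEl)) (g - 1), by
        obtain ⟨⟨K, hK⟩, -⟩ := Classical.choose_spec (sol_step hβ (F β)
          (fun d => if _h : 2 ≤ d ∧ ∀ i, (d:ℤ) ∣ β i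
            then solA F N (fun i => β i / (d:ℤ)) else zeroEl))
        exact ⟨K + 1, fun g hg => hK (g - 1) (by omega)⟩⟩

lemma solA_fst (F : (Fin r → ℤ) → LaurentSeries ℚ) (N : ℕ) {β : Fin r → ℤ} (hβ : β ≠ 0) :
    (solA F (N+1) β).1 = fun g => Classical.choose (sol_step hβ (F β)
      (fun d => if _h : 2 ≤ d ∧ ∀ i, (d:ℤ) ∣ β i
        then solA F N (fun i => β i / (d:ℤ)) else zeroEl)) (g - 1) := by
  rw [solA, dif_neg hβ]

lemma solA_stab (F : (Fin r → ℤ) → LaurentSeries ℚ) :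
    ∀ (k N M : ℕ) (β : Fin r → ℤ), nrm β = k → nrm β ≤ N → nrm β ≤ M →
      solA F (N+1) β = solA F (M+1) β := by
  intro k
  induction k using Nat.strong_induction_on with
  | _ k IH =>
    intro N M β hk hN hM
    by_cases hβ : β = 0
    · subst hβ; rw [solA, solA, dif_pos rfl, dif_pos rfl]
    · have hw : (fun (d : ℕ) => if _h : 2 ≤ d ∧ ∀ i, (d:ℤ) ∣ β i
            then solA F N (fun i => β i / (d:ℤ)) else zeroEl)
          = (fun (d : ℕ) => if _h : 2 ≤ d ∧ ∀ i, (d:ℤ) ∣ β i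
            then solA F M (fun i => β i / (d:ℤ)) else zeroEl) := by
        funext d
        by_cases h : 2 ≤ d ∧ ∀ i, (d:ℤ) ∣ β i
        · rw [dif_pos h, dif_pos h]
          have hlt : nrm (fun i => β i / (d:ℤ)) < nrm β := nrm_div_lt hβ h.1 h.2
          have hpos : 0 < nrm β := nrm_pos hβ
          obtain ⟨N', rfl⟩ : ∃ N', N = N' + 1 := ⟨N - 1, by omega⟩
          obtain ⟨M', rfl⟩ : ∃ M', M = M' + 1 := ⟨M - 1, by omega⟩
          exact IH (nrm (fun i => β i / (d:ℤ))) (by omega) _ _ _ rfl (by omega) (by omega)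
        · rw [dif_neg h, dif_neg h]
      have h2 := congrArg (fun w : ℕ → {c : ℤ → ℚ // ∃ K : ℤ, ∀ g, K ≤ g → c g = 0} =>
        Classical.choose (sol_step hβ (F β) w)) hw
      rw [solA, solA, dif_neg hβ, dif_neg hβ]
      apply Subtype.ext
      funext g
      exact congrFun h2 (g - 1)

/-- The BPS invariants. -/
noncomputable def solN (F : (Fin r → ℤ) → LaurentSeries ℚ) : ℤ → (Fin r → ℤ) → ℚ :=
  fun g β => (solA F (nrm β + 1) β).1 g

lemma sol_zero (F : (Fin r → ℤ) → LaurentSeries ℚ) (g : ℤ) : solN F g 0 = 0 := by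
  show (solA F (nrm (0 : Fin r → ℤ) + 1) 0).1 g = 0
  rw [solA, dif_pos rfl]
  rfl

lemma sol_vanish (F : (Fin r → ℤ) → LaurentSeries ℚ) (β : Fin r → ℤ) :
    ∃ K : ℤ, ∀ g, K ≤ g → solN F g β = 0 :=
  (solA F (nrm β + 1) β).2

end Sol

section Master

variable {r : ℕ}

lemma support_mul_psi' {a : ℤ → ℚ} {K : ℤ} (ha : ∀ g, K ≤ g → a g = 0) (m : ℤ) :
    (Function.support fun k => a (k + 1) * (Psi ^ k).coeff m) ⊆ ↑(Finset.Icc (-m) K) := by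
  intro k hk
  simp only [Function.mem_support] at hk
  simp only [Finset.coe_Icc, Set.mem_Icc]
  constructor
  · by_contra hlt
    push_neg at hlt
    rw [psi_zpow_coeff_low (by omega), mul_zero] at hk
    exact hk rfl
  · by_contra hlt
    push_neg at hlt
    rw [ha (k + 1) (by omega), zero_mul] at hk
    exact hk rfl

lemma sol_master (F : (Fin r → ℤ) → LaurentSeries ℚ) {β : Fin r → ℤ} (hβ : β ≠ 0) (m : ℤ) :
    (F β).coeff m
      = (∑ᶠ g : ℤ, solN F g β * (Psi ^ (g - 1)).coeff m) + corr (solN F) β m := by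
  obtain ⟨N', hN'⟩ : ∃ N', nrm β = N' + 1 := ⟨nrm β - 1, by have := nrm_pos hβ; omega⟩
  set w : ℕ → {c : ℤ → ℚ // ∃ K : ℤ, ∀ g, K ≤ g → c g = 0} :=
    fun d => if _h : 2 ≤ d ∧ ∀ i, (d:ℤ) ∣ β i
      then solA F (nrm β) (fun i => β i / (d:ℤ)) else zeroEl with hwdef
  have hkey := (Classical.choose_spec (sol_step hβ (F β) w)).2 m
  have hcorr : corrV β (fun d g => (w d).1 g) m = corr (solN F) β m := by
    rw [corr, corrV, corrV]
    apply finsum_congr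
    intro g
    apply Finset.sum_congr rfl
    intro d hd
    rw [Finset.mem_Icc] at hd
    by_cases hc : 0 < d ∧ ∀ i : Fin r, (d:ℤ) ∣ β i
    · rw [if_pos hc, if_pos hc]
      have hwd : (w d).1 g = solN F g (fun i => β i / (d:ℤ)) := by
        rw [hwdef]
        simp only [dif_pos (⟨hd.1, hc.2⟩ : 2 ≤ d ∧ ∀ i : Fin r, (d:ℤ) ∣ β i)]
        have hstab := solA_stab F (nrm (fun i => β i / (d:ℤ))) N'
          (nrm (fun i => β i / (d:ℤ))) (fun i => β i / (d:ℤ)) rfl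
          (by have := nrm_div_lt hβ hd.1 hc.2; omega) le_rfl
        rw [hN', hstab]
        rfl
      rw [hwd]
    · rw [if_neg hc, if_neg hc]
  have hfst : ∀ g : ℤ, solN F g β = Classical.choose (sol_step hβ (F β) w) (g - 1) := by
    intro g
    show (solA F (nrm β + 1) β).1 g = _
    rw [solA_fst F (nrm β) hβ]
  rw [hcorr] at hkey
  have hre : ∑ᶠ k : ℤ, Classical.choose (sol_step hβ (F β) w) k * (Psi ^ k).coeff m
      = ∑ᶠ g : ℤ, solN F g β * (Psi ^ (g - 1)).coeff m := by
    rw [← finsum_comp_equiv (Equiv.subRight (1:ℤ))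
      (f := fun k => Classical.choose (sol_step hβ (F β) w) k * (Psi ^ k).coeff m)]
    apply finsum_congr
    intro g
    simp only [Equiv.subRight_apply]
    rw [hfst g]
  rw [hre] at hkey
  linarith

end Master
end BPS

open BPS

/-- **Lemma 3.4** of Pandharipande–Thomas, "Curve counting via stable pairs in the derived
category", together with the subsequent vanishing lemma.  Fix `r ≥ 1`.  Given, for every nonzero
`β ∈ ℤ^r`, a formal Laurent series `F_β ∈ ℚ((q))`, there is a unique family of rational numbers
`n_{g,β}` (`g ∈ ℤ`, `β ∈ ℤ^r` nonzero, normalized by `n_{g,0} = 0`) such that for each `β ≠ 0` one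
has `n_{g,β} = 0` for all sufficiently large `g`, and
`F_β(q) = Σ_{g ∈ ℤ} Σ_{d | div(β)} n_{g,β/d} · ((−1)^{g−1}/d) · ((−q)^d − 2 + (−q)^{−d})^{g−1}`
coefficientwise in `ℚ((q))`.  (Here `d | div(β)` is expressed by the equivalent condition that
`d ≥ 1` divides every component of `β`.) -/
theorem bps_invariants_exist_unique (r : ℕ) (hr : 1 ≤ r)
    (F : (Fin r → ℤ) → LaurentSeries ℚ) :
    ∃! n : ℤ → (Fin r → ℤ) → ℚ,
      (∀ g : ℤ, n g 0 = 0) ∧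
      (∀ β : Fin r → ℤ, β ≠ 0 → ∃ G : ℤ, ∀ g : ℤ, G ≤ g → n g β = 0) ∧
      (∀ β : Fin r → ℤ, β ≠ 0 → ∀ m : ℤ,
        (F β).coeff m =
          ∑ᶠ g : ℤ, ∑ᶠ d : ℕ,
            if 0 < d ∧ ∀ i : Fin r, (d : ℤ) ∣ β i then
              n g (fun i => β i / (d : ℤ)) * ((-1 : ℚ) ^ (g - 1) / (d : ℚ)) *
                ((PhiK d) ^ (g - 1)).coeff m
            else 0) := by
  classical
  refine ⟨solN F, ⟨fun g => sol_zero F g, fun β hβ => sol_vanish F β, ?_⟩, ?_⟩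
  · intro β hβ m
    obtain ⟨G, hG⟩ := uniform_bound hβ (solN F) (fun β' => sol_vanish F β')
    show (F β).coeff m = ∑ᶠ g : ℤ, ∑ᶠ d : ℕ, tms (solN F) β m g d
    rw [rhs_split (solN F) hβ hG m]
    exact sol_master F hβ m
  · intro n' hn'
    obtain ⟨h0', hvan', hid'⟩ := hn'
    have hvall' : ∀ β' : Fin r → ℤ, ∃ K : ℤ, ∀ g, K ≤ g → n' g β' = 0 := by
      intro β'
      by_cases h : β' = 0
      · exact ⟨0, fun g _ => by rw [h]; exact h0' g⟩
      · exact hvan' β' h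
    have main : ∀ (k : ℕ) (β : Fin r → ℤ), nrm β ≤ k → ∀ g, n' g β = solN F g β := by
      intro k
      induction k using Nat.strong_induction_on with
      | _ k IH =>
        intro β hβk g
        by_cases hβ : β = 0
        · rw [hβ, h0' g, sol_zero]
        · obtain ⟨G1, hG1⟩ := uniform_bound hβ n' hvall'
          obtain ⟨G2, hG2⟩ := uniform_bound hβ (solN F) (fun β' => sol_vanish F β')
          set G : ℤ := max G1 G2 with hGdef
          have hG1' : ∀ d : ℕ, 0 < d → (∀ i, (d:ℤ) ∣ β i) → ∀ g, G ≤ g →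
              n' g (fun i => β i / (d:ℤ)) = 0 :=
            fun d hd hdvd g hg => hG1 d hd hdvd g (by omega)
          have hG2' : ∀ d : ℕ, 0 < d → (∀ i, (d:ℤ) ∣ β i) → ∀ g, G ≤ g →
              solN F g (fun i => β i / (d:ℤ)) = 0 :=
            fun d hd hdvd g hg => hG2 d hd hdvd g (by omega)
          have hid1 : ∀ m : ℤ, (F β).coeff m = ∑ᶠ g : ℤ, ∑ᶠ d : ℕ, tms n' β m g d :=
            hid' β hβ
          have ecorr : ∀ m, corr n' β m = corr (solN F) β m := by
            intro m
            rw [corr, corr, corrV, corrV]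
            apply finsum_congr
            intro g'
            apply Finset.sum_congr rfl
            intro d hd
            rw [Finset.mem_Icc] at hd
            by_cases hc : 0 < d ∧ ∀ i : Fin r, (d:ℤ) ∣ β i
            · rw [if_pos hc, if_pos hc]
              have hlt : nrm (fun i => β i / (d:ℤ)) < nrm β := nrm_div_lt hβ hd.1 hc.2
              rw [IH (nrm (fun i => β i / (d:ℤ))) (by omega) _ le_rfl g']
            · rw [if_neg hc, if_neg hc]
          have epsi : ∀ m, (∑ᶠ g : ℤ, n' g β * (Psi ^ (g - 1)).coeff m)
              = ∑ᶠ g : ℤ, solN F g β * (Psi ^ (g - 1)).coeff m := by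
            intro m
            have h1 := hid1 m
            rw [rhs_split n' hβ hG1' m] at h1
            have h2 := sol_master F hβ m
            rw [ecorr m] at h1
            linarith
          have hn'β : ∀ g, G ≤ g → n' g β = 0 := by
            intro g hg
            have h := hG1' 1 one_pos (fun i => by simp) g hg
            rwa [div_one_eq] at h
          have hsolβ : ∀ g, G ≤ g → solN F g β = 0 := by
            intro g hg
            have h := hG2' 1 one_pos (fun i => by simp) g hg
            rwa [div_one_eq] at h
          have hz : ∀ m, ∑ᶠ kk : ℤ, (n' (kk+1) β - solN F (kk+1) β) * (Psi ^ kk).coeff m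
              = 0 := by
            intro m
            have hf1 : (Function.support fun kk => n' (kk+1) β * (Psi ^ kk).coeff m).Finite :=
              Set.Finite.subset (Finset.finite_toSet _) (support_mul_psi' hn'β m)
            have hf2 : (Function.support fun kk =>
                solN F (kk+1) β * (Psi ^ kk).coeff m).Finite :=
              Set.Finite.subset (Finset.finite_toSet _) (support_mul_psi' hsolβ m)
            have hsub : ∑ᶠ kk : ℤ, (n' (kk+1) β - solN F (kk+1) β) * (Psi ^ kk).coeff m
                = (∑ᶠ kk : ℤ, n' (kk+1) β * (Psi ^ kk).coeff m)
                  - ∑ᶠ kk : ℤ, solN F (kk+1) β * (Psi ^ kk).coeff m := by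
              rw [← finsum_sub_distrib hf1 hf2]
              apply finsum_congr
              intro kk
              ring
            have c1 : ∑ᶠ kk : ℤ, n' (kk+1) β * (Psi ^ kk).coeff m
                = ∑ᶠ g : ℤ, n' g β * (Psi ^ (g - 1)).coeff m := by
              rw [← finsum_comp_equiv (Equiv.addRight (1:ℤ))
                (f := fun g => n' g β * (Psi ^ (g - 1)).coeff m)]
              apply finsum_congr
              intro kk
              simp only [Equiv.coe_addRight]
              rw [add_sub_cancel_right]
            have c2 : ∑ᶠ kk : ℤ, solN F (kk+1) β * (Psi ^ kk).coeff m
                = ∑ᶠ g : ℤ, solN F g β * (Psi ^ (g - 1)).coeff m := by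
              rw [← finsum_comp_equiv (Equiv.addRight (1:ℤ))
                (f := fun g => solN F g β * (Psi ^ (g - 1)).coeff m)]
              apply finsum_congr
              intro kk
              simp only [Equiv.coe_addRight]
              rw [add_sub_cancel_right]
            rw [hsub, c1, c2, epsi m, sub_self]
          have hzero := expansion_unique
            (fun kk => n' (kk+1) β - solN F (kk+1) β) G
            (fun kk hkk => by
              show n' (kk+1) β - solN F (kk+1) β = 0
              rw [hn'β (kk+1) (by omega), hsolβ (kk+1) (by omega), sub_self])
            hz (g - 1)
          have h3 : g - 1 + 1 = g := by ring
          rw [h3] at hzero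
          linarith
    funext g β
    exact main (nrm β) β le_rfl g
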